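/- Let Ξ(s) = Σ_{j≥0} F_∞(j) s^j and G_N(s) = Σ_{j≥-D} f_N(j) s^j. Then for all complex s with |s| < 1 and s ≠ 0, Ξ(s)(s^D G_N(s) - s^D) = Σ_{j=0}^{D-1} F_∞(j) Σ_{x=j}^{D-1} f_N(x-D-j) s^x, provided M ≤ 0. -/

import Mathlib

private lemma sum_Icc_int_eq_range (m : ℕ) (g : ℤ → ℝ) :
    ∑ j ∈ Finset.Icc (0:ℤ) (m:ℤ), g j = ∑ j ∈ Finset.range (m+1), g (j : ℤ) := by
  rw [Int.Icc_eq_finset_map, Finset.sum_map]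
  simp [Nat.castEmbedding_apply, addLeftEmbedding_apply]

/-- Generating-function identity (case `M ≤ 0`): if `F = F_∞` satisfies the renewal
recurrence with kernel `f = f_N` supported on `{-D, -D+1, …}`, then for `|s| < 1`, `s ≠ 0`,
`Ξ(s)(s^D G_N(s) - s^D) = ∑_{j=0}^{D-1} F(j) ∑_{x=j}^{D-1} f(x-D-j) s^x`,
where `Ξ(s) = ∑_{j≥0} F(j) s^j` and `s^D G_N(s) = ∑_{k≥0} f(k-D) s^k`. -/
theorem generating_function_identity (D : ℕ) (hD : 1 ≤ D) (M : ℤ) (hM : M ≤ 0)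
    (f : ℤ → ℝ) (hf0 : ∀ j, 0 ≤ f j)
    (hfsupp : ∀ j : ℤ, j < -(D : ℤ) → f j = 0)
    (hfD : 0 < f (-(D : ℤ)))
    (hfsum : HasSum (fun k : ℕ => f ((k : ℤ) - D)) 1)
    (F : ℤ → ℝ) (hF01 : ∀ x, 0 ≤ F x ∧ F x ≤ 1)
    (hFzero : ∀ x : ℤ, x < M → F x = 0)
    (hFrec : ∀ x : ℤ, M ≤ x →
      F x = ∑ j ∈ Finset.Icc (0 : ℤ) (x + D), f (x - j) * F j) :
    ∀ s : ℂ, ‖s‖ < 1 → s ≠ 0 →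
      (∑' j : ℕ, (F j : ℂ) * s ^ j) *
        ((∑' k : ℕ, (f ((k : ℤ) - D) : ℂ) * s ^ k) - s ^ D) =
      ∑ j ∈ Finset.range D, (F j : ℂ) *
        ∑ x ∈ Finset.Icc j (D - 1), (f ((x : ℤ) - D - j) : ℂ) * s ^ x := by
  intro s hs hs0
  set a : ℕ → ℂ := fun k => (F k : ℂ) * s ^ k with ha
  set b : ℕ → ℂ := fun k => (f ((k : ℤ) - D) : ℂ) * s ^ k with hb
  have hna : Summable fun k => ‖a k‖ := by
    apply Summable.of_nonneg_of_le (fun k => norm_nonneg _)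
      (fun k => ?_) (summable_geometric_of_lt_one (norm_nonneg s) hs)
    calc ‖a k‖ = |F k| * ‖s‖ ^ k := by
          simp [ha, abs_of_nonneg, norm_pow, Complex.norm_real]
      _ ≤ 1 * ‖s‖ ^ k := by
          gcongr
          · exact abs_le.2 ⟨by linarith [(hF01 k).1], (hF01 k).2⟩
      _ = ‖s‖ ^ k := one_mul _
  have hnb : Summable fun k => ‖b k‖ := by
    apply Summable.of_nonneg_of_le (fun k => norm_nonneg _) (fun k => ?_) hfsum.summable
    calc ‖b k‖ = |f ((k:ℤ) - D)| * ‖s‖ ^ k := by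
          simp [hb, norm_pow, Complex.norm_real]
      _ ≤ f ((k:ℤ) - D) * 1 := by
          rw [abs_of_nonneg (hf0 _)]
          gcongr
          · exact hf0 _
          · exact pow_le_one₀ (norm_nonneg s) hs.le
      _ = f ((k:ℤ) - D) := mul_one _
  -- Cauchy product
  have hprod : (∑' n, a n) * (∑' n, b n) =
      ∑' n, ∑ k ∈ Finset.range (n+1), a k * b (n - k) :=
    tsum_mul_tsum_eq_tsum_sum_range_of_summable_norm hna hnb
  -- c n : the clean form of the Cauchy coefficient
  set c : ℕ → ℂ := fun n => ∑ k ∈ Finset.range (n+1), a k * b (n - k) with hc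
  have hcsum : Summable c := (summable_norm_sum_mul_range_of_summable_norm hna hnb).of_norm
  -- clean formula for c
  have hcform : ∀ n, c n = (∑ k ∈ Finset.range (n+1),
      (F k : ℂ) * (f ((n:ℤ) - k - D) : ℂ)) * s ^ n := by
    intro n
    rw [hc, Finset.sum_mul]
    apply Finset.sum_congr rfl
    intro k hk
    have hk' : k ≤ n := Nat.lt_succ_iff.mp (Finset.mem_range.mp hk)
    have hcast : ((n - k : ℕ) : ℤ) = (n : ℤ) - k := Nat.cast_sub hk'
    have hpow : s ^ k * s ^ (n - k) = s ^ n := by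
      rw [← pow_add, Nat.add_sub_cancel' hk']
    simp only [ha, hb, hcast]
    rw [← hpow]
    ring
  -- c (n + D) = F n * s^(n+D) via recurrence
  have hctail : ∀ n : ℕ, c (n + D) = (F n : ℂ) * s ^ (n + D) := by
    intro n
    rw [hcform]
    congr 1
    have hrec := hFrec n (le_trans hM (Int.ofNat_nonneg n))
    have : (F (n:ℤ) : ℂ) = ((∑ j ∈ Finset.Icc (0:ℤ) ((n:ℤ) + D), f ((n:ℤ) - j) * F j : ℝ) : ℂ) := by
      exact_mod_cast congrArg (fun r : ℝ => (r : ℂ)) hrec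
    rw [this]
    rw [show ((n:ℤ) + D) = ((n + D : ℕ) : ℤ) by push_cast; ring,
      sum_Icc_int_eq_range (n + D) (fun j => f ((n:ℤ) - j) * F j)]
    push_cast
    apply Finset.sum_congr rfl
    intro k _
    rw [show ((n:ℤ) + (D:ℤ)) - k - D = (n:ℤ) - k by ring]
    ring
  -- split tsum
  have hsplit : ∑' n, c n = (∑ n ∈ Finset.range D, c n) + (∑' n, a n) * s ^ D := by
    rw [← Summable.sum_add_tsum_nat_add D hcsum]
    congr 1
    have : ∀ n : ℕ, c (n + D) = a n * s ^ D := by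
      intro n
      rw [hctail, ha]
      simp only [pow_add]
      ring
    simp_rw [this]
    exact tsum_mul_right
  have hmain : (∑' n, a n) * ((∑' n, b n) - s ^ D) = ∑ n ∈ Finset.range D, c n := by
    rw [mul_sub, hprod, ← hc, hsplit]
    ring
  rw [hmain]
  -- now the finite identity
  -- extend inner sums and swap
  have hleft : ∑ n ∈ Finset.range D, c n =
      ∑ n ∈ Finset.range D, ∑ k ∈ Finset.range D,
        (F k : ℂ) * (f ((n:ℤ) - k - D) : ℂ) * s ^ n := by
    apply Finset.sum_congr rfl
    intro n hn
    rw [hcform, Finset.sum_mul]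
    apply Finset.sum_subset
    · intro k hk
      exact Finset.mem_range.mpr (lt_of_lt_of_le (Finset.mem_range.mp hk)
        (Nat.succ_le_of_lt (Finset.mem_range.mp hn)))
    · intro k _ hk
      have hkn : n < k := by
        by_contra h
        exact hk (Finset.mem_range.mpr (Nat.lt_succ_of_le (not_lt.mp h)))
      have : f ((n:ℤ) - k - D) = 0 := by
        apply hfsupp
        have : (n:ℤ) < k := by exact_mod_cast hkn
        linarith
      rw [this]
      simp
  rw [hleft, Finset.sum_comm]
  apply Finset.sum_congr rfl
  intro j hj
  rw [Finset.mul_sum]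
  have hsub : Finset.Icc j (D - 1) ⊆ Finset.range D := by
    intro x hx
    have h2 := (Finset.mem_Icc.mp hx).2
    exact Finset.mem_range.mpr (lt_of_le_of_lt h2 (Nat.sub_lt (lt_of_lt_of_le Nat.zero_lt_one hD) Nat.one_pos))
  have hzero : ∀ x ∈ Finset.range D, x ∉ Finset.Icc j (D - 1) →
      (F j : ℂ) * ((f ((x:ℤ) - D - j) : ℂ) * s ^ x) = 0 := by
    intro x hxr hx
    have hxj : x < j := by
      by_contra h
      apply hx
      rw [Finset.mem_Icc]
      exact ⟨not_lt.mp h, Nat.le_pred_of_lt (Finset.mem_range.mp hxr)⟩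
    have hf : f ((x:ℤ) - D - j) = 0 := by
      apply hfsupp
      have : (x:ℤ) < j := by exact_mod_cast hxj
      linarith
    rw [hf]
    simp
  rw [Finset.sum_subset hsub hzero]
  apply Finset.sum_congr rfl
  intro x _
  rw [show ((x:ℤ) - j - D) = ((x:ℤ) - D - j) from by ring]
  ring
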